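/- Let β ∈ (π/2, π), and let A > 0, σ > 0 satisfy A² + σ² < 1 and A·cos β + σ·sin β < 0. Set r̄ = √(A² + σ²), θ̄₂ = arcsin(A/r̄) + β − π, and λ = (A cos β + σ sin β)/(1 − A² − σ²). Then λ < 0, sin θ̄₂ = (−A cos β − σ sin β)/r̄ ∈ (0, 1), the identity r̄ = (sin θ̄₂ − √(sin² θ̄₂ + 4λ²))/(2λ) holds, and λ is the unique negative real number satisfying this identity. -/

import Mathlib

set_option maxHeartbeats 1600000 in
/-- The boundary condition `r₂(θ̄₂) = r̄` for the outer exterior nodoid: it holds for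
`λ = (A cos β + σ sin β)/(1 − A² − σ²)`, and `λ` is the unique negative number for
which it holds. -/
theorem outer_nodoid_matching (β A σ : ℝ)
    (hβ : β ∈ Set.Ioo (Real.pi / 2) Real.pi) (hA : 0 < A) (hσ : 0 < σ)
    (h1 : A ^ 2 + σ ^ 2 < 1) (h2 : A * Real.cos β + σ * Real.sin β < 0)
    (rbar θ2 lam : ℝ)
    (hrbar : rbar = Real.sqrt (A ^ 2 + σ ^ 2))
    (hθ2 : θ2 = Real.arcsin (A / rbar) + β - Real.pi)
    (hlam : lam = (A * Real.cos β + σ * Real.sin β) / (1 - A ^ 2 - σ ^ 2)) :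
    lam < 0 ∧
    Real.sin θ2 = (-(A * Real.cos β) - σ * Real.sin β) / rbar ∧
    Real.sin θ2 ∈ Set.Ioo (0:ℝ) 1 ∧
    rbar = (Real.sin θ2 - Real.sqrt ((Real.sin θ2) ^ 2 + 4 * lam ^ 2)) / (2 * lam) ∧
    (∀ l : ℝ, l < 0 →
      rbar = (Real.sin θ2 - Real.sqrt ((Real.sin θ2) ^ 2 + 4 * l ^ 2)) / (2 * l) →
      l = lam) := by
  obtain ⟨hβ1, hβ2⟩ := hβ
  have hrpos : 0 < rbar := by rw [hrbar]; positivity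
  have hrne : rbar ≠ 0 := ne_of_gt hrpos
  have hr2 : rbar ^ 2 = A ^ 2 + σ ^ 2 := by
    rw [hrbar, sq, Real.mul_self_sqrt (by positivity)]
  have hr1 : rbar ^ 2 < 1 := by rw [hr2]; exact h1
  have hden : 0 < 1 - A ^ 2 - σ ^ 2 := by linarith
  have hlamneg : lam < 0 := by
    rw [hlam]; exact div_neg_of_neg_of_pos h2 hden
  have hAr : A ≤ rbar := by nlinarith
  have hsinβ : 0 < Real.sin β :=
    Real.sin_pos_of_pos_of_lt_pi (lt_trans (by linarith [Real.pi_pos]) hβ1) hβ2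
  have hcosβ : Real.cos β < 0 :=
    Real.cos_neg_of_pi_div_two_lt_of_lt hβ1 (by linarith [Real.pi_pos])
  have hcos_arcsin : Real.cos (Real.arcsin (A / rbar)) = σ / rbar := by
    rw [Real.cos_arcsin]
    have h : 1 - (A / rbar) ^ 2 = (σ / rbar) ^ 2 := by
      field_simp; nlinarith
    rw [h, Real.sqrt_sq (by positivity)]
  have hsin : Real.sin θ2 = (-(A * Real.cos β) - σ * Real.sin β) / rbar := by
    rw [hθ2, Real.sin_sub_pi, Real.sin_add,
      Real.sin_arcsin (by rw [le_div_iff₀ hrpos]; nlinarith)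
        (by rw [div_le_one hrpos]; exact hAr), hcos_arcsin]
    field_simp; ring
  set s := Real.sin θ2 with hsdef
  have hspos : 0 < s := by
    rw [hsin]; apply div_pos (by linarith) hrpos
  have hcs := Real.sin_sq_add_cos_sq β
  have hAs : 0 < A * Real.sin β - σ * Real.cos β := by nlinarith
  have ht2 : (-(A * Real.cos β) - σ * Real.sin β) ^ 2 < rbar ^ 2 := by
    nlinarith [mul_pos hAs hAs]
  have hs1 : s < 1 := by
    rw [hsin, div_lt_one hrpos]
    nlinarith [ht2, show 0 < -(A * Real.cos β) - σ * Real.sin β + rbar from by linarith]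
  -- key relation
  have hkey : lam * (1 - rbar ^ 2) = -(s * rbar) := by
    rw [hlam, hsin, hr2]
    field_simp
    ring
  have hlamne : lam ≠ 0 := ne_of_lt hlamneg
  have hsqrt : Real.sqrt (s ^ 2 + 4 * lam ^ 2) = s - 2 * lam * rbar := by
    rw [show s ^ 2 + 4 * lam ^ 2 = (s - 2 * lam * rbar) ^ 2 by
      linear_combination 4 * lam * hkey]
    have hlr : 0 < -lam * rbar := mul_pos (by linarith) hrpos
    exact Real.sqrt_sq (by linarith)
  refine ⟨hlamneg, hsin, ⟨hspos, hs1⟩, ?_, ?_⟩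
  · rw [hsqrt]; field_simp; ring
  · intro l hl hl2
    have hlne : l ≠ 0 := ne_of_lt hl
    rw [eq_div_iff (mul_ne_zero two_ne_zero hlne)] at hl2
    have h4 : Real.sqrt (s ^ 2 + 4 * l ^ 2) = s - 2 * l * rbar := by linarith
    have h5 : s ^ 2 + 4 * l ^ 2 = (s - 2 * l * rbar) ^ 2 := by
      rw [← h4, Real.sq_sqrt (by positivity)]
    have h6 : 4 * l * (l * (1 - rbar ^ 2) + s * rbar) = 0 := by
      linear_combination h5
    have h7 : l * (1 - rbar ^ 2) + s * rbar = 0 := by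
      rcases mul_eq_zero.mp h6 with h | h
      · exact absurd (by linarith : l = 0) hlne
      · exact h
    have h8 : l * (1 - rbar ^ 2) = lam * (1 - rbar ^ 2) := by
      rw [hkey]; linarith
    have : (1:ℝ) - rbar ^ 2 ≠ 0 := by nlinarith
    exact mul_right_cancel₀ this h8
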